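/- Let (ℝ^k, δ) be a sublinear diversity. For all finite A ⊆ ℝ^k with |A| > 2, δ(A) ≤ ((|A|−1)/(|A|(|A|−2))) · Σ_{a ∈ A} δ(A \ {a}). -/

import Mathlib

open Pointwise

section aux

variable {V : Type*} [AddCommGroup V] [DecidableEq V]

lemma aux_sum_mem_sum {ι : Type*} (s : Finset ι) (f : ι → Finset V) (x : ι → V)
    (hx : ∀ i ∈ s, x i ∈ f i) : (∑ i ∈ s, x i) ∈ ∑ i ∈ s, f i := by
  classical
  induction s using Finset.induction_on with
  | empty => simpa using Finset.zero_mem_zero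
  | @insert a t h ih =>
    rw [Finset.sum_insert h, Finset.sum_insert h]
    exact Finset.add_mem_add (hx a (Finset.mem_insert_self a t))
      (ih fun i hi => hx i (Finset.mem_insert_of_mem hi))

lemma aux_sum_nonempty {ι : Type*} (s : Finset ι) (f : ι → Finset V)
    (hf : ∀ i ∈ s, (f i).Nonempty) : (∑ i ∈ s, f i).Nonempty := by
  classical
  choose x hx using hf
  refine ⟨∑ i ∈ s.attach, x i i.2, ?_⟩
  have h := aux_sum_mem_sum s.attach (fun i : s => f i) (fun i => x i i.2)
    (fun i _ => hx i i.2)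
  rwa [← Finset.sum_attach s f]

lemma aux_subadd_sum (δ : Finset V → ℝ)
    (hsub : ∀ A B : Finset V, A.Nonempty → B.Nonempty → δ (A + B) ≤ δ A + δ B)
    {ι : Type*} (s : Finset ι) (f : ι → Finset V) (hs : s.Nonempty)
    (hf : ∀ i ∈ s, (f i).Nonempty) :
    δ (∑ i ∈ s, f i) ≤ ∑ i ∈ s, δ (f i) := by
  classical
  induction s using Finset.induction_on with
  | empty => exact absurd hs (by simp)
  | @insert a t ha ih =>
    rw [Finset.sum_insert ha, Finset.sum_insert ha]
    rcases t.eq_empty_or_nonempty with rfl | ht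
    · simp
    · refine le_trans (hsub _ _ (hf a (Finset.mem_insert_self a t))
        (aux_sum_nonempty t f fun i hi => hf i (Finset.mem_insert_of_mem hi))) ?_
      exact add_le_add_right (ih ht fun i hi => hf i (Finset.mem_insert_of_mem hi)) _

end aux

theorem stmt_9 {k : ℕ} (δ : Finset (Fin k → ℝ) → ℝ)
    (hnn : ∀ A : Finset (Fin k → ℝ), 0 ≤ δ A)
    (hzero : ∀ A : Finset (Fin k → ℝ), δ A = 0 ↔ A.card ≤ 1)
    (hmono : ∀ A B : Finset (Fin k → ℝ), A ⊆ B → δ A ≤ δ B)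
    (hhom : ∀ (A : Finset (Fin k → ℝ)) (lam : ℝ), A.Nonempty → 0 ≤ lam →
      δ (lam • A) = lam * δ A)
    (hsub : ∀ A B : Finset (Fin k → ℝ), A.Nonempty → B.Nonempty →
      δ (A + B) ≤ δ A + δ B) :
    ∀ A : Finset (Fin k → ℝ), 2 < A.card →
      δ A ≤ ((A.card : ℝ) - 1) / ((A.card : ℝ) * ((A.card : ℝ) - 2)) *
        ∑ a ∈ A, δ (A.erase a) := by
  classical
  intro A hcard
  set n : ℕ := A.card with hn
  have hn3 : 3 ≤ n := hcard
  obtain ⟨b0, hb0⟩ : A.Nonempty := Finset.card_pos.mp (by omega)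
  have hA : A.Nonempty := ⟨b0, hb0⟩
  -- singletons have diversity 0
  have hsingle : ∀ x : Fin k → ℝ, δ {x} = 0 := fun x =>
    (hzero {x}).2 (by simp)
  -- translation invariance
  have htrans : ∀ (B : Finset (Fin k → ℝ)) (x : Fin k → ℝ), B.Nonempty →
      δ (B + {x}) = δ B := by
    intro B x hB
    have h1 : δ (B + {x}) ≤ δ B := by
      have := hsub B {x} hB ⟨x, Finset.mem_singleton_self x⟩
      rwa [hsingle, add_zero] at this
    have h2 : δ B ≤ δ (B + {x}) := by
      have h3 : δ (B + {x} + {-x}) ≤ δ (B + {x}) := by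
        have := hsub (B + {x}) {-x} (hB.add ⟨x, Finset.mem_singleton_self x⟩)
          ⟨-x, Finset.mem_singleton_self _⟩
        rwa [hsingle, add_zero] at this
      have he : B + {x} + {-x} = B := by
        rw [add_assoc, Finset.singleton_add_singleton, add_neg_cancel,
          Finset.singleton_zero, add_zero]
      rwa [he] at h3
    exact le_antisymm h1 h2
  -- erase sets are nonempty
  have herase : ∀ a ∈ A, (A.erase a).Nonempty := by
    intro a ha
    rw [← Finset.card_pos, Finset.card_erase_of_mem ha]
    omega
  -- the big Minkowski sum
  set S : Finset (Fin k → ℝ) := ∑ a ∈ A, A.erase a with hS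
  have hSne : S.Nonempty := aux_sum_nonempty A _ herase
  have hSle : δ S ≤ ∑ a ∈ A, δ (A.erase a) :=
    aux_subadd_sum δ hsub A _ hA herase
  -- key membership: for b ∈ A, c ∈ A.erase b, ((n-1):ℝ) • b + c ∈ S
  have hmemS : ∀ b ∈ A, ∀ c ∈ A.erase b, ((n : ℝ) - 1) • b + c ∈ S := by
    intro b hb c hc
    have hcb : c ≠ b := (Finset.mem_erase.mp hc).1
    have hcA : c ∈ A := (Finset.mem_erase.mp hc).2
    have hmem : (∑ a ∈ A, (if a = b then c else b)) ∈ S := by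
      apply aux_sum_mem_sum
      intro i hi
      by_cases h : i = b
      · simp [h, Finset.mem_erase, hcb, hcA]
      · simp [h, Finset.mem_erase, Ne.symm h, hb]
    have hsum : (∑ a ∈ A, (if a = b then c else b)) = ((n : ℝ) - 1) • b + c := by
      rw [← Finset.add_sum_erase A _ hb]
      simp only [if_pos rfl]
      rw [Finset.sum_ite_of_false (fun x hx => (Finset.mem_erase.mp hx).1) _ _]
      rw [Finset.sum_const, Finset.card_erase_of_mem hb,
        ← Nat.cast_smul_eq_nsmul ℝ, Nat.cast_sub (by omega : 1 ≤ n), Nat.cast_one]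
      exact add_comm _ _
    rwa [hsum] at hmem
  set s : Fin k → ℝ := ∑ a ∈ A, a with hsdef
  set c0 : ℝ := (n : ℝ) * ((n : ℝ) - 2) with hc0
  have hn3' : (3 : ℝ) ≤ (n : ℝ) := by exact_mod_cast hn3
  have hc0pos : (0 : ℝ) < c0 := by
    apply mul_pos <;> linarith
  set T : Finset (Fin k → ℝ) := ∑ _c ∈ A.erase b0, S with hT
  have hTconst : ∀ b ∈ A, T = ∑ _c ∈ A.erase b, S := by
    intro b hb
    rw [hT, Finset.sum_const, Finset.sum_const,
      Finset.card_erase_of_mem hb, Finset.card_erase_of_mem hb0]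
  -- key inclusion
  have hincl : c0 • A + {s} ⊆ T := by
    intro x hx
    rw [Finset.mem_add] at hx
    obtain ⟨y, hy, z, hz, rfl⟩ := hx
    rw [Finset.mem_smul_finset] at hy
    obtain ⟨b, hb, rfl⟩ := hy
    rw [Finset.mem_singleton] at hz
    subst hz
    rw [hTconst b hb]
    have hmem : (∑ c ∈ A.erase b, (((n : ℝ) - 1) • b + c)) ∈ ∑ _c ∈ A.erase b, S :=
      aux_sum_mem_sum _ _ _ (fun c hc => hmemS b hb c hc)
    have hcalc : (∑ c ∈ A.erase b, (((n : ℝ) - 1) • b + c)) = c0 • b + s := by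
      rw [Finset.sum_add_distrib, Finset.sum_const, Finset.card_erase_of_mem hb]
      have h1 : (∑ c ∈ A.erase b, c) = s - b := by
        rw [hsdef, ← Finset.add_sum_erase A _ hb]
        abel
      rw [h1, ← Nat.cast_smul_eq_nsmul ℝ, Nat.cast_sub (by omega : 1 ≤ n),
        Nat.cast_one, smul_smul, hc0]
      module
    rwa [hcalc] at hmem
  -- put it together
  have hc0A : (c0 • A).Nonempty := hA.smul_finset
  have step1 : c0 * δ A = δ (c0 • A + {s}) := by
    rw [htrans _ _ hc0A, hhom A c0 hA hc0pos.le]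
  have step2 : δ (c0 • A + {s}) ≤ δ T := hmono _ _ hincl
  have step3 : δ T ≤ ((n : ℝ) - 1) * δ S := by
    have hb0e : (A.erase b0).Nonempty := herase b0 hb0
    have h := aux_subadd_sum δ hsub (A.erase b0) (fun _ => S) hb0e
      (fun _ _ => hSne)
    have h2 : δ T ≤ ∑ _x ∈ A.erase b0, δ S := by rw [hT]; exact h
    rwa [Finset.sum_const, Finset.card_erase_of_mem hb0, nsmul_eq_mul,
      Nat.cast_sub (by omega : 1 ≤ n), Nat.cast_one] at h2
  have step4 : ((n : ℝ) - 1) * δ S ≤ ((n : ℝ) - 1) * ∑ a ∈ A, δ (A.erase a) := by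
    apply mul_le_mul_of_nonneg_left hSle
    linarith
  have hfinal : c0 * δ A ≤ ((n : ℝ) - 1) * ∑ a ∈ A, δ (A.erase a) := by
    rw [step1]
    exact step2.trans (step3.trans step4)
  rw [div_mul_eq_mul_div, le_div_iff₀ hc0pos]
  calc δ A * c0 = c0 * δ A := by ring
    _ ≤ ((n : ℝ) - 1) * ∑ a ∈ A, δ (A.erase a) := hfinal
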